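/- Let V be a finite-dimensional real inner product space, W a finite-dimensional real vector space, and c : V → End(W) a linear map satisfying the Clifford relation c(v) ∘ c(v) = -‖v‖² · id_W for all v ∈ V. Let X : ℝ → V be differentiable at t ∈ ℝ, and write A(s) = c(X(s)) and A'(t) for the derivative of A at t. Then tr(A'(t) ∘ A'(t)) = -‖X'(t)‖² · tr(id_W), where tr denotes the trace of endomorphisms of W. (This is item (1) of Lemma 3.7 of the paper: tr[∂_{x_j}[c(X)] ∂_{x_j}[c(X)]] = -|∇_{e_j}X|² tr[id], stated along one coordinate direction.) -/

import Mathlib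

open ContinuousLinearMap

/-- Lemma 3.7(1): if `c : V → End(W)` is linear with `c(v)² = -‖v‖² id`, `X : ℝ → V`
is differentiable at `t` and `A(s) = c(X(s))`, then
`tr(A'(t) ∘ A'(t)) = -‖X'(t)‖² · tr(id_W)`. -/
theorem trace_derivClifford_comp_derivClifford
    {V W : Type*} [NormedAddCommGroup V] [InnerProductSpace ℝ V]
    [FiniteDimensional ℝ V]
    [NormedAddCommGroup W] [NormedSpace ℝ W] [FiniteDimensional ℝ W]
    (c : V →ₗ[ℝ] (W →L[ℝ] W))
    (hc : ∀ v : V, (c v).comp (c v) = -‖v‖ ^ 2 • ContinuousLinearMap.id ℝ W)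
    (X : ℝ → V) (t : ℝ) (hX : DifferentiableAt ℝ X t)
    (A : ℝ → (W →L[ℝ] W)) (hA : A = fun s => c (X s)) :
    LinearMap.trace ℝ W ((deriv A t).comp (deriv A t)).toLinearMap
      = -‖deriv X t‖ ^ 2 * LinearMap.trace ℝ W (LinearMap.id : W →ₗ[ℝ] W) := by
  have hderiv : deriv A t = c (deriv X t) := by
    subst hA
    have h := (LinearMap.toContinuousLinearMap c).hasFDerivAt.comp_hasDerivAt t
      hX.hasDerivAt
    simpa [Function.comp_def] using h.deriv
  rw [hderiv, hc]
  simp [LinearMap.map_smul]
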